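/- Explicit value of the energy of the generalized solitons κ*(d,ν): For every d ∈ ℝ^N with |d| < 1 and every ν > −1 + |d|, setting λ = ( (1−|d|²) / ((1+ν)² − |d|²) )^{1/(p−1)}, one has E( κ*₁(d,ν,·), κ*₂(d,ν,·) ) = ( E(κ₀, 0) / (p−1) ) · λ² · ( p + 1 + 2 λ^{p−1} ( ν²/(1−|d|²) − 1 ) ), where E(κ₀, 0) denotes the energy of the constant pair (κ₀, 0). -/

import Mathlib

open MeasureTheory Metric
open scoped RealInnerProductSpace

noncomputable section

/-- The exponent `α = 2/(p−1) − (N−1)/2`. -/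
def alphaExp (N : ℕ) (p : ℝ) : ℝ := 2 / (p - 1) - ((N : ℝ) - 1) / 2

/-- The weight `ρ(y) = (1−|y|²)^α` on the unit ball. -/
def rho (N : ℕ) (p : ℝ) (y : EuclideanSpace ℝ (Fin N)) : ℝ :=
  (1 - ‖y‖ ^ 2) ^ alphaExp N p

/-- The energy functional `E(r₁,r₂)`. -/
def Efun (N : ℕ) (p : ℝ) (r₁ r₂ : EuclideanSpace ℝ (Fin N) → ℝ) : ℝ :=
  ∫ y in ball (0 : EuclideanSpace ℝ (Fin N)) 1,
    (1 / 2 * r₂ y ^ 2 + 1 / 2 * ‖gradient r₁ y‖ ^ 2 - 1 / 2 * ⟪y, gradient r₁ y⟫ ^ 2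
      + (p + 1) / (p - 1) ^ 2 * r₁ y ^ 2 - 1 / (p + 1) * |r₁ y| ^ (p + 1)) * rho N p y

/-- `κ₀ = (2(p+1)/(p−1)²)^{1/(p−1)}`. -/
def kappa0 (p : ℝ) : ℝ := (2 * (p + 1) / (p - 1) ^ 2) ^ (1 / (p - 1))

/-- First component of the generalized soliton `κ*(d,ν)`. -/
def kappaStar1 (N : ℕ) (p : ℝ) (d : EuclideanSpace ℝ (Fin N)) (ν : ℝ)
    (y : EuclideanSpace ℝ (Fin N)) : ℝ :=
  kappa0 p * (1 - ‖d‖ ^ 2) ^ (1 / (p - 1)) * (1 + ν + ⟪d, y⟫) ^ (-(2 / (p - 1)))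

/-- Second component of the generalized soliton `κ*(d,ν)`. -/
def kappaStar2 (N : ℕ) (p : ℝ) (d : EuclideanSpace ℝ (Fin N)) (ν : ℝ)
    (y : EuclideanSpace ℝ (Fin N)) : ℝ :=
  -(2 * kappa0 p * ν / (p - 1)) * (1 - ‖d‖ ^ 2) ^ (1 / (p - 1)) *
    (1 + ν + ⟪d, y⟫) ^ (-((p + 1) / (p - 1)))

section Aux

open Set intervalIntegral

lemma cont_rpow_base {γ : ℝ} (hγ : 0 < γ) : Continuous fun x : ℝ => x ^ γ := by
  rw [continuous_iff_continuousAt]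
  exact fun x => Real.continuousAt_rpow_const x γ (Or.inr hγ.le)

lemma cont_one_sub_sq_rpow {γ : ℝ} (hγ : 0 < γ) :
    Continuous fun t : ℝ => (1 - t ^ 2) ^ γ :=
  (cont_rpow_base hγ).comp (by continuity)

lemma contOn_shift {a b m : ℝ} (hb : 0 ≤ b) (hba : b < a) :
    ContinuousOn (fun t : ℝ => (a + b * t) ^ m) (Icc (-1 : ℝ) 1) := by
  intro t ht
  have hpos : 0 < a + b * t := by nlinarith [ht.1, ht.2]
  have h : ContinuousAt (fun t : ℝ => a + b * t) t := by fun_prop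
  exact (h.rpow_const (Or.inl hpos.ne')).continuousWithinAt

lemma intervalIntegrable_aux {γ a b m : ℝ} (hγ : 0 < γ) (hb : 0 ≤ b) (hba : b < a) :
    IntervalIntegrable (fun t : ℝ => (1 - t ^ 2) ^ γ * (a + b * t) ^ m) volume (-1 : ℝ) 1 := by
  apply ContinuousOn.intervalIntegrable
  rw [uIcc_of_le (by norm_num)]
  exact ((cont_one_sub_sq_rpow hγ).continuousOn).mul (contOn_shift hb hba)

/-- 1D identity (A): Möbius substitution. -/
lemma oneDimA {γ a b : ℝ} (hγ : 0 < γ) (hb : 0 ≤ b) (hba : b < a) :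
    ∫ t in (-1 : ℝ)..1, (1 - t ^ 2) ^ γ * (a + b * t) ^ (-(2 * γ + 2))
      = (a ^ 2 - b ^ 2) ^ (-(γ + 1)) * ∫ t in (-1 : ℝ)..1, (1 - t ^ 2) ^ γ := by
  have ha : 0 < a := lt_of_le_of_lt hb hba
  obtain ⟨e, he0, he1, hbae⟩ : ∃ e : ℝ, 0 ≤ e ∧ e < 1 ∧ b = a * e :=
    ⟨b / a, div_nonneg hb ha.le, (div_lt_one ha).2 hba, by field_simp⟩
  set φ : ℝ → ℝ := fun u => (u - e) / (1 - e * u) with hφ_def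
  set φ' : ℝ → ℝ := fun u => (1 - e ^ 2) / (1 - e * u) ^ 2 with hφ'_def
  have hD : ∀ u ∈ Icc (-1 : ℝ) 1, 0 < 1 - e * u := by
    intro u hu; nlinarith [hu.1, hu.2]
  have hderiv : ∀ u ∈ Icc (-1 : ℝ) 1, HasDerivAt φ (φ' u) u := by
    intro u hu
    have h0 : (1 - e * u) ≠ 0 := (hD u hu).ne'
    have h1 : HasDerivAt (fun u : ℝ => u - e) 1 u := (hasDerivAt_id u).sub_const e
    have h2 : HasDerivAt (fun u : ℝ => 1 - e * u) (-e) u := by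
      simpa using ((hasDerivAt_id u).const_mul e).const_sub 1
    have := h1.div h2 h0
    refine this.congr_deriv (Eq.symm ?_)
    simp only [hφ'_def]
    field_simp
    ring
  have hφcont : ContinuousOn φ (uIcc (-1 : ℝ) 1) := by
    rw [uIcc_of_le (by norm_num)]
    exact fun u hu => ((hderiv u hu).continuousAt).continuousWithinAt
  have hφ'cont : ContinuousOn φ' (uIcc (-1 : ℝ) 1) := by
    rw [uIcc_of_le (by norm_num)]
    intro u hu
    have h0 : ((1 - e * u) ^ 2) ≠ 0 := pow_ne_zero 2 (hD u hu).ne'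
    have hc : Continuous fun u : ℝ => (1 - e * u) ^ 2 := by continuity
    exact (ContinuousAt.div continuousAt_const hc.continuousAt h0).continuousWithinAt
  have hmaps : ∀ u ∈ Icc (-1 : ℝ) 1, φ u ∈ Icc (-1 : ℝ) 1 := by
    intro u hu
    have hDu := hD u hu
    constructor
    · rw [le_div_iff₀ hDu]; nlinarith [hu.1, hu.2]
    · rw [div_le_iff₀ hDu]; nlinarith [hu.1, hu.2]
  have hg : ContinuousOn (fun t : ℝ => (1 - t ^ 2) ^ γ * (a + b * t) ^ (-(2 * γ + 2)))
      (φ '' uIcc (-1 : ℝ) 1) := by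
    apply ContinuousOn.mono (((cont_one_sub_sq_rpow hγ).continuousOn).mul (contOn_shift hb hba))
    rw [uIcc_of_le (by norm_num : (-1:ℝ) ≤ 1)]
    rintro t ⟨u, hu, rfl⟩
    exact hmaps u hu
  have key := intervalIntegral.integral_comp_smul_deriv'' hφcont
    (fun x hx => by
      have hx' : x ∈ Icc (-1:ℝ) 1 := Ioo_subset_Icc_self (by simpa using hx)
      exact ((hderiv x hx').hasDerivWithinAt))
    hφ'cont hg
  have hφa : φ (-1) = -1 := by
    have h1e : (1 : ℝ) + e ≠ 0 := by positivity
    simp only [hφ_def]; rw [div_eq_iff (ne_of_gt (by linarith))]; ring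
  have hφb : φ 1 = 1 := by
    have h1e : (1 : ℝ) - e ≠ 0 := by linarith
    simp only [hφ_def]; field_simp
  rw [hφa, hφb] at key
  rw [← key, ← intervalIntegral.integral_const_mul]
  apply intervalIntegral.integral_congr
  rw [uIcc_of_le (by norm_num : (-1:ℝ) ≤ 1)]
  intro x hx
  have hDx := hD x hx
  have hm : (0:ℝ) < 1 - e ^ 2 := by nlinarith
  have hq : (0:ℝ) < a ^ 2 - b ^ 2 := by nlinarith
  have h1mx : 0 ≤ 1 - x ^ 2 := by nlinarith [hx.1, hx.2]
  have hfrac1 : 1 - φ x ^ 2 = (1 - x ^ 2) * ((1 - e ^ 2) / (1 - e * x) ^ 2) := by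
    simp only [hφ_def]
    rw [div_pow, one_sub_div (pow_ne_zero 2 hDx.ne'), mul_div_assoc',
      div_left_inj' (pow_ne_zero 2 hDx.ne')]
    ring
  have hfrac2 : a + b * φ x = (a * (1 - e ^ 2)) / (1 - e * x) := by
    rw [hbae]; simp only [hφ_def]; field_simp; ring
  simp only [Function.comp_apply, smul_eq_mul]
  rw [hfrac1, hfrac2]
  set M := (1 - e ^ 2) / (1 - e * x) ^ 2 with hM
  set A := a * (1 - e ^ 2) / (1 - e * x) with hA
  have hMpos : 0 < M := by rw [hM]; positivity
  have hApos : 0 < A := by rw [hA]; positivity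
  rw [Real.mul_rpow h1mx hMpos.le]
  have h2 : A ^ (-(2 * γ + 2)) = ((A ^ 2)⁻¹) ^ (γ + 1) := by
    have e1 : -(2 * γ + 2) = (-2 : ℝ) * (γ + 1) := by ring
    rw [e1, Real.rpow_mul hApos.le]
    congr 1
    rw [show ((-2 : ℝ)) = -((2:ℕ):ℝ) by norm_num, Real.rpow_neg hApos.le, Real.rpow_natCast]
  have h3 : M * (A ^ 2)⁻¹ = (a ^ 2 - b ^ 2)⁻¹ := by
    have hne : (1 - e * x) ≠ 0 := hDx.ne'
    have key2 : a ^ 2 - b ^ 2 = a ^ 2 * (1 - e ^ 2) := by rw [hbae]; ring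
    have hm' : (1 - e ^ 2) ≠ 0 := hm.ne'
    rw [hM, hA, key2]
    field_simp
  have hscalar : φ' x * (M ^ γ * A ^ (-(2 * γ + 2))) = (a ^ 2 - b ^ 2) ^ (-(γ + 1)) := by
    have hφ'M : φ' x = M := rfl
    have hMM : M * M ^ γ = M ^ (γ + 1) := by
      rw [show γ + 1 = 1 + γ by ring, Real.rpow_add hMpos, Real.rpow_one]
    rw [hφ'M, h2, ← mul_assoc, hMM, ← Real.mul_rpow hMpos.le (by positivity), h3,
      Real.inv_rpow hq.le, ← Real.rpow_neg hq.le]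
  calc φ' x * ((1 - x ^ 2) ^ γ * M ^ γ * A ^ (-(2 * γ + 2)))
      = (φ' x * (M ^ γ * A ^ (-(2 * γ + 2)))) * (1 - x ^ 2) ^ γ := by ring
    _ = (a ^ 2 - b ^ 2) ^ (-(γ + 1)) * (1 - x ^ 2) ^ γ := by rw [hscalar]

/-- 1D identity (B): integration by parts. -/
lemma oneDimB {γ a b : ℝ} (hγ : 0 < γ) (hb : 0 ≤ b) (hba : b < a) :
    2 * a * γ * (∫ t in (-1 : ℝ)..1, (1 - t ^ 2) ^ γ * (a + b * t) ^ (-(2 * γ + 1)))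
      + ∫ t in (-1 : ℝ)..1, (1 - t ^ 2) ^ γ * (a + b * t) ^ (-(2 * γ))
    = (2 * γ + 1) * (a ^ 2 - b ^ 2)
        * ∫ t in (-1 : ℝ)..1, (1 - t ^ 2) ^ γ * (a + b * t) ^ (-(2 * γ + 2)) := by
  have ha : 0 < a := lt_of_le_of_lt hb hba
  rcases eq_or_lt_of_le hb with hb0 | hbpos
  · subst hb0
    simp only [zero_mul, add_zero, mul_zero]
    rw [intervalIntegral.integral_mul_const, intervalIntegral.integral_mul_const,
      intervalIntegral.integral_mul_const]
    have h1 : a ^ (-(2 * γ + 1)) = a ^ (-(2 * γ)) * a⁻¹ := by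
      rw [show -(2 * γ + 1) = -(2 * γ) + (-1) by ring, Real.rpow_add ha, Real.rpow_neg_one]
    have h2 : a ^ (-(2 * γ + 2)) = a ^ (-(2 * γ)) * (a⁻¹ * a⁻¹) := by
      rw [show -(2 * γ + 2) = -(2 * γ) + (-1 + -1) by ring, Real.rpow_add ha,
        Real.rpow_add ha, Real.rpow_neg_one]
    rw [h1, h2]
    have hane : a ≠ 0 := ha.ne'
    field_simp
    ring
  · set F : ℝ → ℝ := fun t => (1 - t ^ 2) ^ (γ + 1) * (a + b * t) ^ (-(2 * γ + 1)) with hF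
    set f' : ℝ → ℝ := fun t => (1 / b) *
      (-(((1 - t ^ 2) ^ γ) * (a + b * t) ^ (-(2 * γ)))
        - 2 * a * γ * (((1 - t ^ 2) ^ γ) * (a + b * t) ^ (-(2 * γ + 1)))
        + (2 * γ + 1) * (a ^ 2 - b ^ 2) * (((1 - t ^ 2) ^ γ) * (a + b * t) ^ (-(2 * γ + 2))))
      with hf'
    have hFderiv : ∀ t ∈ Ioo (-1 : ℝ) 1, HasDerivAt F (f' t) t := by
      intro t ht
      have h1t : 0 < 1 - t ^ 2 := by nlinarith [ht.1, ht.2]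
      have hw : 0 < a + b * t := by nlinarith [ht.1, ht.2]
      have hinner1 : HasDerivAt (fun t : ℝ => 1 - t ^ 2) (-(2 * t)) t := by
        simpa using ((hasDerivAt_pow 2 t).const_sub 1)
      have hinner2 : HasDerivAt (fun t : ℝ => a + b * t) b t := by
        simpa using ((hasDerivAt_id t).const_mul b).const_add a
      have hd1 : HasDerivAt (fun t : ℝ => (1 - t ^ 2) ^ (γ + 1))
          ((-(2 * t)) * (γ + 1) * (1 - t ^ 2) ^ (γ + 1 - 1)) t :=
        hinner1.rpow_const (Or.inl h1t.ne')
      have hd2 : HasDerivAt (fun t : ℝ => (a + b * t) ^ (-(2 * γ + 1)))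
          (b * (-(2 * γ + 1)) * (a + b * t) ^ (-(2 * γ + 1) - 1)) t :=
        hinner2.rpow_const (Or.inl hw.ne')
      have := hd1.mul hd2
      refine this.congr_deriv (Eq.symm ?_)
      have e1 : γ + 1 - 1 = γ := by ring
      have e2 : -(2 * γ + 1) - 1 = -(2 * γ + 2) := by ring
      rw [e1, e2]
      have hP1 : (1 - t ^ 2) ^ (γ + 1) = (1 - t ^ 2) ^ γ * (1 - t ^ 2) := by
        rw [Real.rpow_add h1t, Real.rpow_one]
      have hW1 : (a + b * t) ^ (-(2 * γ + 1)) = (a + b * t) ^ (-(2 * γ)) * (a + b * t)⁻¹ := by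
        rw [show -(2 * γ + 1) = -(2 * γ) + (-1) by ring, Real.rpow_add hw,
          Real.rpow_neg_one]
      have hW2 : (a + b * t) ^ (-(2 * γ + 2))
          = (a + b * t) ^ (-(2 * γ)) * ((a + b * t)⁻¹ * (a + b * t)⁻¹) := by
        rw [show -(2 * γ + 2) = -(2 * γ) + (-1 + -1) by ring, Real.rpow_add hw,
          Real.rpow_add hw, Real.rpow_neg_one]
      rw [hf']
      simp only
      rw [hP1, hW1, hW2]
      have hwne : (a + b * t) ≠ 0 := hw.ne'
      have hbne : b ≠ 0 := hbpos.ne'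
      field_simp
      ring
    have hFcont : ContinuousOn F (Icc (-1 : ℝ) 1) :=
      ((cont_one_sub_sq_rpow (by linarith : (0:ℝ) < γ + 1)).continuousOn).mul
        (contOn_shift hb hba)
    have hint : IntervalIntegrable f' volume (-1 : ℝ) 1 := by
      apply IntervalIntegrable.const_mul
      exact (((intervalIntegrable_aux hγ hb hba).neg.sub
        ((intervalIntegrable_aux hγ hb hba).const_mul (2 * a * γ))).add
        ((intervalIntegrable_aux hγ hb hba).const_mul ((2 * γ + 1) * (a ^ 2 - b ^ 2))))
    have hFTC := intervalIntegral.integral_eq_sub_of_hasDerivAt_of_le (by norm_num)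
      hFcont hFderiv hint
    have hF1 : F 1 = 0 := by
      show (1 - (1:ℝ) ^ 2) ^ (γ + 1) * ((a + b * 1) ^ (-(2 * γ + 1))) = 0
      rw [show (1:ℝ) - 1 ^ 2 = 0 by norm_num, Real.zero_rpow (by positivity), zero_mul]
    have hFm1 : F (-1) = 0 := by
      show (1 - (-1:ℝ) ^ 2) ^ (γ + 1) * ((a + b * (-1)) ^ (-(2 * γ + 1))) = 0
      rw [show (1:ℝ) - (-1) ^ 2 = 0 by norm_num, Real.zero_rpow (by positivity), zero_mul]
    rw [hF1, hFm1, sub_zero] at hFTC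
    rw [intervalIntegral.integral_const_mul] at hFTC
    rw [intervalIntegral.integral_add, intervalIntegral.integral_sub] at hFTC
    · rw [intervalIntegral.integral_neg, intervalIntegral.integral_const_mul,
        intervalIntegral.integral_const_mul] at hFTC
      have hbne : (1 / b) ≠ 0 := by positivity
      have := mul_eq_zero.mp hFTC
      rcases this with h | h
      · exact absurd h hbne
      · linarith
    · exact (intervalIntegrable_aux hγ hb hba).neg
    · exact (intervalIntegrable_aux hγ hb hba).const_mul _
    · exact ((intervalIntegrable_aux hγ hb hba).neg.sub
        ((intervalIntegrable_aux hγ hb hba).const_mul _))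
    · exact (intervalIntegrable_aux hγ hb hba).const_mul _

/-- the slice constant -/
def sliceC (n : ℕ) (α : ℝ) : ℝ :=
  ∫ z in {z : Fin n → ℝ | ∑ i, z i ^ 2 < 1}, (1 - ∑ i, z i ^ 2) ^ α

set_option maxHeartbeats 1000000 in
lemma slice' (n : ℕ) {α : ℝ} (hα : 0 < α) (b : ℝ) (g : ℝ → ℝ) (hg : Continuous g) :
    ∫ y in ball (0 : EuclideanSpace ℝ (Fin (n + 1))) 1, g (b * y 0) * (1 - ‖y‖ ^ 2) ^ α
      = sliceC n α * ∫ t in (-1 : ℝ)..1, g (b * t) * (1 - t ^ 2) ^ (α + n / 2) := by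
  classical
  set F : EuclideanSpace ℝ (Fin (n + 1)) → ℝ :=
    fun y => g (b * y 0) * (1 - ‖y‖ ^ 2) ^ α with hFdef
  have hFcont : Continuous F := by
    apply Continuous.mul
    · exact hg.comp (continuous_const.mul (EuclideanSpace.proj (0 : Fin (n+1))).continuous)
    · exact (cont_rpow_base hα).comp (continuous_const.sub (continuous_norm.pow 2))
  set e := (MeasurableEquiv.toLp 2 (Fin (n + 1) → ℝ)).symm with he
  have hmp := (EuclideanSpace.volume_preserving_symm_measurableEquiv_toLp (Fin (n + 1))).symm
  have hemb := ((MeasurableEquiv.toLp 2 (Fin (n + 1) → ℝ)).symm).symm.measurableEmbedding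
  have hstep1 : ∫ x in e.symm ⁻¹' (ball 0 1), F (e.symm x) = ∫ y in ball 0 1, F y :=
    hmp.setIntegral_preimage_emb hemb F (ball 0 1)
  set S : Set (Fin (n+1) → ℝ) := {x | ∑ i, x i ^ 2 < 1} with hS
  have hsum_norm : ∀ x : Fin (n+1) → ℝ, ‖(e.symm x : EuclideanSpace ℝ (Fin (n+1)))‖ ^ 2
      = ∑ i, x i ^ 2 := by
    intro x
    rw [EuclideanSpace.norm_eq, Real.sq_sqrt (by positivity)]
    congr 1; ext i; rw [Real.norm_eq_abs, sq_abs]; rfl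
  have hSmeas : MeasurableSet S := by
    have : Continuous fun x : Fin (n+1) → ℝ => ∑ i, x i ^ 2 :=
      continuous_finset_sum _ fun i _ => (continuous_apply i).pow 2
    exact measurableSet_lt this.measurable measurable_const
  have hpre : e.symm ⁻¹' (ball 0 1) = S := by
    ext x
    simp only [Set.mem_preimage, mem_ball_zero_iff, hS, Set.mem_setOf_eq]
    rw [show ‖(e.symm x : EuclideanSpace ℝ (Fin (n+1)))‖
        = Real.sqrt (∑ i, x i ^ 2) by
      rw [← hsum_norm x]; exact (Real.sqrt_sq (norm_nonneg _)).symm]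
    rw [Real.sqrt_lt' one_pos, one_pow]
  have hFe : ∀ x : Fin (n+1) → ℝ, F (e.symm x) = g (b * x 0) * (1 - ∑ i, x i ^ 2) ^ α := by
    intro x
    rw [hFdef]
    simp only
    rw [hsum_norm x]
    rfl
  set H : (Fin (n+1) → ℝ) → ℝ :=
    S.indicator (fun x => g (b * x 0) * (1 - ∑ i, x i ^ 2) ^ α) with hH
  have hstep2 : ∫ x in S, F (e.symm x) = ∫ x, H x := by
    rw [MeasureTheory.integral_indicator hSmeas]
    exact setIntegral_congr_fun hSmeas (fun x _ => hFe x)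
  have hIntF : IntegrableOn F (ball 0 1) volume :=
    (hFcont.continuousOn.integrableOn_compact (isCompact_closedBall _ _)).mono_set
      ball_subset_closedBall
  have hIntH : Integrable H volume := by
    have h1 : Integrable ((ball (0 : EuclideanSpace ℝ (Fin (n+1))) 1).indicator F) volume :=
      (MeasureTheory.integrable_indicator_iff measurableSet_ball).2 hIntF
    have h2 : Integrable (((ball (0 : EuclideanSpace ℝ (Fin (n+1))) 1).indicator F) ∘ e.symm)
        volume := (hmp.integrable_comp_emb hemb).2 h1
    apply h2.congr
    filter_upwards with x
    by_cases hx : x ∈ S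
    · have hx' : e.symm x ∈ ball (0 : EuclideanSpace ℝ (Fin (n+1))) 1 := by
        rw [← hpre] at hx; exact hx
      simp only [Function.comp_apply, Set.indicator_of_mem hx', hH, Set.indicator_of_mem hx]
      exact hFe x
    · have hx' : e.symm x ∉ ball (0 : EuclideanSpace ℝ (Fin (n+1))) 1 := by
        rw [← hpre] at hx; exact hx
      simp only [Function.comp_apply, Set.indicator_of_notMem hx', hH,
        Set.indicator_of_notMem hx]
  set π := MeasurableEquiv.piFinSuccAbove (fun _ : Fin (n+1) => ℝ) 0 with hπ
  have hπmp := (volume_preserving_piFinSuccAbove (fun _ : Fin (n+1) => ℝ) 0).symm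
  have hπemb := π.symm.measurableEmbedding
  have hπsymm : ∀ (t : ℝ) (z : Fin n → ℝ), π.symm (t, z) = Fin.cons t z := by
    intro t z
    rw [MeasurableEquiv.piFinSuccAbove_symm_apply]
    simp [Fin.insertNthEquiv, Fin.insertNth_zero]
  have hstep3 : ∫ p : ℝ × (Fin n → ℝ), H (π.symm p) = ∫ x, H x :=
    hπmp.integral_comp hπemb H
  have hIntHπ : Integrable (fun p : ℝ × (Fin n → ℝ) => H (π.symm p))
      (volume.prod volume) := by
    have := (hπmp.integrable_comp_emb hπemb).2 hIntH
    exact this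
  have hstep4 : ∫ p : ℝ × (Fin n → ℝ), H (π.symm p)
      = ∫ t : ℝ, ∫ z : Fin n → ℝ, H (π.symm (t, z)) := by
    exact MeasureTheory.integral_prod _ hIntHπ
  have hHval : ∀ (t : ℝ) (z : Fin n → ℝ), H (π.symm (t, z))
      = if t ^ 2 + ∑ j, z j ^ 2 < 1 then g (b * t) * (1 - (t ^ 2 + ∑ j, z j ^ 2)) ^ α
        else 0 := by
    intro t z
    rw [hπsymm t z, hH]
    have hsum : ∑ i, (Fin.cons t z : Fin (n+1) → ℝ) i ^ 2 = t ^ 2 + ∑ j, z j ^ 2 := by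
      rw [show (fun i => (Fin.cons t z : Fin (n+1) → ℝ) i ^ 2)
          = Fin.cons (t ^ 2) (fun j => z j ^ 2) from ?_]
      · exact Fin.sum_cons _ _
      · ext i
        refine Fin.cases ?_ ?_ i
        · rfl
        · intro j; rfl
    by_cases hc : t ^ 2 + ∑ j, z j ^ 2 < 1
    · rw [Set.indicator_of_mem (by rw [hS, Set.mem_setOf_eq, hsum]; exact hc), if_pos hc]
      rw [hsum]
      rfl
    · rw [Set.indicator_of_notMem (by rw [hS, Set.mem_setOf_eq, hsum]; exact hc), if_neg hc]
  set Cn := sliceC n α with hCn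
  have hSmeas' : MeasurableSet {z : Fin n → ℝ | ∑ i, z i ^ 2 < 1} := by
    have : Continuous fun z : Fin n → ℝ => ∑ i, z i ^ 2 :=
      continuous_finset_sum _ fun i _ => (continuous_apply i).pow 2
    exact measurableSet_lt this.measurable measurable_const
  have hCn_ind : Cn
      = ∫ z : Fin n → ℝ, (if ∑ j, z j ^ 2 < 1 then (1 - ∑ j, z j ^ 2) ^ α else 0) := by
    rw [hCn, sliceC, ← MeasureTheory.integral_indicator hSmeas']
    congr 1
  have hinner : ∀ t : ℝ, (∫ z : Fin n → ℝ, H (π.symm (t, z)))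
      = (Ioo (-1 : ℝ) 1).indicator
          (fun t => g (b * t) * (1 - t ^ 2) ^ (α + n / 2) * Cn) t := by
    intro t
    by_cases ht : t ^ 2 < 1
    · have h1t : 0 < 1 - t ^ 2 := by linarith
      have htIoo : t ∈ Ioo (-1 : ℝ) 1 := by constructor <;> nlinarith
      rw [Set.indicator_of_mem htIoo]
      set r := Real.sqrt (1 - t ^ 2) with hrdef
      have hr : 0 < r := Real.sqrt_pos.2 h1t
      have hr2 : r ^ 2 = 1 - t ^ 2 := Real.sq_sqrt h1t.le
      set χ : (Fin n → ℝ) → ℝ :=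
        fun z => if ∑ j, z j ^ 2 < 1 - t ^ 2 then (1 - t ^ 2 - ∑ j, z j ^ 2) ^ α else 0
        with hχ
      have heq : ∀ z, H (π.symm (t, z)) = g (b * t) * χ z := by
        intro z; rw [hHval]; simp only [hχ]
        by_cases hc : ∑ j, z j ^ 2 < 1 - t ^ 2
        · rw [if_pos (by linarith), if_pos hc]
          have : 1 - (t ^ 2 + ∑ j, z j ^ 2) = 1 - t ^ 2 - ∑ j, z j ^ 2 := by ring
          rw [this]
        · rw [if_neg (by intro h; exact hc (by linarith)), if_neg hc, mul_zero]
      have hcomp : ∀ w : Fin n → ℝ, χ (r • w)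
          = (1 - t ^ 2) ^ α * (if ∑ j, w j ^ 2 < 1 then (1 - ∑ j, w j ^ 2) ^ α else 0) := by
        intro w
        have hsum : ∑ j, (r • w) j ^ 2 = (1 - t ^ 2) * ∑ j, w j ^ 2 := by
          simp only [Pi.smul_apply, smul_eq_mul, mul_pow, ← Finset.mul_sum, hr2]
        simp only [hχ, hsum]
        by_cases hc : ∑ j, w j ^ 2 < 1
        · rw [if_pos (by nlinarith), if_pos hc]
          rw [← Real.mul_rpow h1t.le (by linarith)]
          congr 1; ring
        · rw [if_neg (by push_neg at hc ⊢; nlinarith), if_neg hc, mul_zero]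
      have hsc := MeasureTheory.Measure.integral_comp_smul_of_nonneg
        (volume : Measure (Fin n → ℝ)) χ r (hR := hr.le)
      rw [Module.finrank_fin_fun] at hsc
      simp only [hcomp] at hsc
      rw [MeasureTheory.integral_const_mul, ← hCn_ind] at hsc
      have hχint : ∫ z, χ z = r ^ n * ((1 - t ^ 2) ^ α * Cn) := by
        rw [hsc, smul_eq_mul, ← mul_assoc, mul_inv_cancel₀ (by positivity), one_mul]
      simp only [heq]
      rw [MeasureTheory.integral_const_mul, hχint]
      have hrn : (r : ℝ) ^ (n : ℕ) * (1 - t ^ 2) ^ α = (1 - t ^ 2) ^ (α + n / 2) := by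
        rw [← Real.rpow_natCast r n, hrdef, Real.sqrt_eq_rpow]
        rw [← Real.rpow_mul h1t.le, ← Real.rpow_add h1t]
        congr 1; ring
      rw [← mul_assoc, ← hrn]; ring
    · have htIoo : t ∉ Ioo (-1 : ℝ) 1 := by
        intro h; exact ht (by nlinarith [h.1, h.2])
      rw [Set.indicator_of_notMem htIoo]
      have : ∀ z : Fin n → ℝ, H (π.symm (t, z)) = 0 := by
        intro z
        rw [hHval, if_neg]
        push_neg at ht ⊢
        have : (0:ℝ) ≤ ∑ j, z j ^ 2 := Finset.sum_nonneg fun j _ => sq_nonneg _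
        linarith
      simp only [this, MeasureTheory.integral_zero]
  have houter : (∫ t : ℝ, ∫ z, H (π.symm (t, z)))
      = Cn * ∫ t in (-1 : ℝ)..1, g (b * t) * (1 - t ^ 2) ^ (α + n / 2) := by
    rw [show (fun t : ℝ => ∫ z, H (π.symm (t, z)))
        = (Ioo (-1 : ℝ) 1).indicator
            (fun t => g (b * t) * (1 - t ^ 2) ^ (α + n / 2) * Cn) from funext hinner]
    rw [MeasureTheory.integral_indicator measurableSet_Ioo,
      intervalIntegral.integral_of_le (by norm_num : (-1:ℝ) ≤ 1),
      integral_Ioc_eq_integral_Ioo, mul_comm Cn, ← MeasureTheory.integral_mul_const]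
  calc ∫ y in ball (0 : EuclideanSpace ℝ (Fin (n + 1))) 1, g (b * y 0) * (1 - ‖y‖ ^ 2) ^ α
      = ∫ x in e.symm ⁻¹' (ball 0 1), F (e.symm x) := hstep1.symm
    _ = ∫ x in S, F (e.symm x) := by rw [hpre]
    _ = ∫ x, H x := hstep2
    _ = ∫ p : ℝ × (Fin n → ℝ), H (π.symm p) := hstep3.symm
    _ = ∫ t : ℝ, ∫ z : Fin n → ℝ, H (π.symm (t, z)) := hstep4
    _ = Cn * ∫ t in (-1 : ℝ)..1, g (b * t) * (1 - t ^ 2) ^ (α + n / 2) := houter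

lemma sliceMain (n : ℕ) {α : ℝ} (hα : 0 < α) (d : EuclideanSpace ℝ (Fin (n + 1)))
    (g : ℝ → ℝ) (hg : Continuous g) :
    ∫ y in ball (0 : EuclideanSpace ℝ (Fin (n + 1))) 1, g ⟪d, y⟫ * (1 - ‖y‖ ^ 2) ^ α
      = sliceC n α * ∫ t in (-1 : ℝ)..1, g (‖d‖ * t) * (1 - t ^ 2) ^ (α + n / 2) := by
  rcases eq_or_ne d 0 with rfl | hd0
  · simp only [inner_zero_left, norm_zero, zero_mul]
    have := slice' n hα 0 g hg
    simpa using this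
  · set b := ‖d‖ with hbdef
    have hb : 0 < b := norm_pos_iff.2 hd0
    set u := b⁻¹ • d with hudef
    have hu : ‖u‖ = 1 := by
      rw [hudef, norm_smul, norm_inv, Real.norm_eq_abs, abs_of_nonneg hb.le, ← hbdef,
        inv_mul_cancel₀ hb.ne']
    have hdbu : d = b • u := by
      rw [hudef, smul_smul, mul_inv_cancel₀ hb.ne', one_smul]
    have hcard : Module.finrank ℝ (EuclideanSpace ℝ (Fin (n + 1)))
        = Fintype.card (Fin (n + 1)) := by
      simp [finrank_euclideanSpace]
    have horth : Orthonormal ℝ (Set.restrict {(0 : Fin (n + 1))} (fun _ => u)) := by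
      constructor
      · intro i; exact hu
      · intro i j hij
        exact absurd (Subsingleton.elim i j) hij
    obtain ⟨B, hB⟩ := horth.exists_orthonormalBasis_extension_of_card_eq hcard
    have hB0 : B 0 = u := hB 0 rfl
    set T := B.repr with hT
    have hTmp := (T.symm).measurePreserving
    have hTemb : MeasurableEmbedding (T.symm : EuclideanSpace ℝ (Fin (n+1)) →
        EuclideanSpace ℝ (Fin (n+1))) := T.symm.toHomeomorph.measurableEmbedding
    set Fn : EuclideanSpace ℝ (Fin (n + 1)) → ℝ :=
      fun y => g ⟪d, y⟫ * (1 - ‖y‖ ^ 2) ^ α with hFn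
    have hstep := hTmp.setIntegral_preimage_emb hTemb Fn (ball 0 1)
    have hpre : (T.symm : EuclideanSpace ℝ (Fin (n+1)) → EuclideanSpace ℝ (Fin (n+1)))
        ⁻¹' (ball 0 1) = ball 0 1 := by
      ext z
      simp [mem_ball_zero_iff]
    rw [hpre] at hstep
    have hval : ∀ z : EuclideanSpace ℝ (Fin (n + 1)),
        Fn (T.symm z) = g (b * z 0) * (1 - ‖z‖ ^ 2) ^ α := by
      intro z
      rw [hFn]
      simp only
      congr 2
      · rw [hdbu, real_inner_smul_left]
        congr 1
        have h2 : (inner ℝ u (T.symm z) : ℝ) = inner ℝ (T u) (T (T.symm z)) :=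
          (T.inner_map_map u (T.symm z)).symm
        rw [h2, T.apply_symm_apply, ← hB0, hT, B.repr_self,
          EuclideanSpace.inner_single_left]
        simp
      · rw [T.symm.norm_map]
    calc ∫ y in ball (0 : EuclideanSpace ℝ (Fin (n + 1))) 1, g ⟪d, y⟫ * (1 - ‖y‖ ^ 2) ^ α
        = ∫ z in ball (0 : EuclideanSpace ℝ (Fin (n + 1))) 1, Fn (T.symm z) := hstep.symm
      _ = ∫ z in ball (0 : EuclideanSpace ℝ (Fin (n + 1))) 1,
            g (b * z 0) * (1 - ‖z‖ ^ 2) ^ α :=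
          setIntegral_congr_fun measurableSet_ball (fun z _ => hval z)
      _ = sliceC n α * ∫ t in (-1 : ℝ)..1, g (b * t) * (1 - t ^ 2) ^ (α + n / 2) :=
          slice' n hα b g hg

end Aux

/-- clamped shifted variable -/
def mx (dn ν c : ℝ) : ℝ := max (1 + ν + c) ((1 + ν - dn) / 2)

/-- the function whose slice integral gives the energy of `κ*`. -/
def Gfun (N : ℕ) (p : ℝ) (d : EuclideanSpace ℝ (Fin N)) (ν : ℝ) (c : ℝ) : ℝ :=
  (kappa0 p * (1 - ‖d‖ ^ 2) ^ (1 / (p - 1))) ^ 2 *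
    ((2 / (p - 1) ^ 2 * (ν ^ 2 - (1 - ‖d‖ ^ 2) - ((1 + ν) ^ 2 - ‖d‖ ^ 2)))
        * mx ‖d‖ ν c ^ (-(2 * (2 / (p - 1)) + 2))
      + ((2 / (p - 1)) ^ 2 * (1 + ν)) * mx ‖d‖ ν c ^ (-(2 * (2 / (p - 1)) + 1))
      + (1 / (p - 1)) * mx ‖d‖ ν c ^ (-(2 * (2 / (p - 1)))))

lemma kappaStar1_grad (N : ℕ) {p : ℝ} (hp1 : 1 < p) (d : EuclideanSpace ℝ (Fin N)) (ν : ℝ)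
    (y : EuclideanSpace ℝ (Fin N)) (hw : 0 < 1 + ν + ⟪d, y⟫) :
    gradient (kappaStar1 N p d ν) y
      = (kappa0 p * (1 - ‖d‖ ^ 2) ^ (1 / (p - 1)) * (-(2 / (p - 1)))
          * (1 + ν + ⟪d, y⟫) ^ (-(2 / (p - 1)) - 1)) • d := by
  apply HasGradientAt.gradient
  rw [hasGradientAt_iff_hasFDerivAt]
  have h1 : HasFDerivAt (fun z : EuclideanSpace ℝ (Fin N) => 1 + ν + ⟪d, z⟫)
      (innerSL ℝ d) y := by
    simpa using ((innerSL ℝ d).hasFDerivAt (x := y)).const_add (1 + ν)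
  have h2 := h1.rpow_const (p := -(2 / (p - 1))) (Or.inl hw.ne')
  have h3 := h2.const_mul (kappa0 p * (1 - ‖d‖ ^ 2) ^ (1 / (p - 1)))
  refine h3.congr_fderiv (Eq.symm ?_)
  ext v
  simp only [InnerProductSpace.toDual_apply_apply, ContinuousLinearMap.coe_smul', Pi.smul_apply,
    innerSL_apply_apply, smul_eq_mul, real_inner_smul_left]
  ring

lemma rpow_p1 {x : ℝ} (hx : 0 < x) (p : ℝ) : x ^ (p + 1) = x ^ (2:ℕ) * x ^ (p - 1) := by
  rw [show p + 1 = 2 + (p - 1) by ring, Real.rpow_add hx,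
    show ((2:ℝ)) = ((2:ℕ):ℝ) by norm_num, Real.rpow_natCast]

set_option maxHeartbeats 1000000 in
lemma pointwise_eq (N : ℕ) {p : ℝ} (hp1 : 1 < p) (d : EuclideanSpace ℝ (Fin N)) (hd : ‖d‖ < 1)
    (ν : ℝ) (hν : -1 + ‖d‖ < ν) (y : EuclideanSpace ℝ (Fin N)) (hy : ‖y‖ < 1) :
    (1 / 2 * kappaStar2 N p d ν y ^ 2 + 1 / 2 * ‖gradient (kappaStar1 N p d ν) y‖ ^ 2
      - 1 / 2 * ⟪y, gradient (kappaStar1 N p d ν) y⟫ ^ 2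
      + (p + 1) / (p - 1) ^ 2 * kappaStar1 N p d ν y ^ 2
      - 1 / (p + 1) * |kappaStar1 N p d ν y| ^ (p + 1)) * rho N p y
    = Gfun N p d ν ⟪d, y⟫ * (1 - ‖y‖ ^ 2) ^ alphaExp N p := by
  have hp : 0 < p - 1 := by linarith
  have hp1' : (0:ℝ) < p + 1 := by linarith
  have hA : (0:ℝ) < 2 * (p + 1) / (p - 1) ^ 2 := by positivity
  have hκ : 0 < kappa0 p := Real.rpow_pos_of_pos hA _
  have hκp : kappa0 p ^ (p - 1) = 2 * (p + 1) / (p - 1) ^ 2 := by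
    rw [kappa0, ← Real.rpow_mul hA.le, one_div, inv_mul_cancel₀ hp.ne', Real.rpow_one]
  have hs : (0:ℝ) < 1 - ‖d‖ ^ 2 := by nlinarith [norm_nonneg d]
  have hX : (0:ℝ) < (1 - ‖d‖ ^ 2) ^ (1 / (p - 1)) := Real.rpow_pos_of_pos hs _
  have hXp : ((1 - ‖d‖ ^ 2) ^ (1 / (p - 1))) ^ (p - 1) = 1 - ‖d‖ ^ 2 := by
    rw [← Real.rpow_mul hs.le, one_div, inv_mul_cancel₀ hp.ne', Real.rpow_one]
  have hcle : |(⟪d, y⟫ : ℝ)| ≤ ‖d‖ := by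
    have h1 := abs_real_inner_le_norm d y
    have h2 : ‖d‖ * ‖y‖ ≤ ‖d‖ * 1 := mul_le_mul_of_nonneg_left hy.le (norm_nonneg d)
    calc |(⟪d, y⟫ : ℝ)| ≤ ‖d‖ * ‖y‖ := h1
      _ ≤ ‖d‖ := by linarith
  obtain ⟨hc1, hc2⟩ := abs_le.1 hcle
  have hw : 0 < 1 + ν + ⟪d, y⟫ := by linarith
  have hmx : mx ‖d‖ ν ⟪d, y⟫ = 1 + ν + ⟪d, y⟫ := max_eq_left (by linarith)
  have hgrad := kappaStar1_grad N hp1 d ν y hw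
  have hWpos : ∀ x : ℝ, 0 < (1 + ν + ⟪d, y⟫) ^ x := fun x => Real.rpow_pos_of_pos hw x
  have hrw2 : ∀ x : ℝ, ((1 + ν + ⟪d, y⟫) ^ x) ^ (2:ℕ) = (1 + ν + ⟪d, y⟫) ^ (x + x) := by
    intro x; rw [pow_two, ← Real.rpow_add hw]
  have hnsm : ∀ r : ℝ, ‖r • d‖ ^ 2 = r ^ 2 * ‖d‖ ^ 2 := by
    intro r; rw [norm_smul, mul_pow, Real.norm_eq_abs, sq_abs]
  have hism : ∀ r : ℝ, (⟪y, r • d⟫ : ℝ) = r * ⟪d, y⟫ := by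
    intro r; rw [real_inner_smul_right, real_inner_comm]
  -- five summands in canonical form
  have h1 : kappaStar2 N p d ν y ^ 2
      = (2 * kappa0 p * ν / (p - 1)) ^ 2 * ((1 - ‖d‖ ^ 2) ^ (1 / (p - 1))) ^ 2
        * (1 + ν + ⟪d, y⟫) ^ (-(2 * (2 / (p - 1)) + 2)) := by
    simp only [kappaStar2]
    calc (-(2 * kappa0 p * ν / (p - 1)) * (1 - ‖d‖ ^ 2) ^ (1 / (p - 1))
          * (1 + ν + ⟪d, y⟫) ^ (-((p + 1) / (p - 1)))) ^ 2
        = (2 * kappa0 p * ν / (p - 1)) ^ 2 * ((1 - ‖d‖ ^ 2) ^ (1 / (p - 1))) ^ 2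
          * ((1 + ν + ⟪d, y⟫) ^ (-((p + 1) / (p - 1)))) ^ (2:ℕ) := by ring
      _ = _ := by
          rw [hrw2, show -((p + 1) / (p - 1)) + -((p + 1) / (p - 1))
            = -(2 * (2 / (p - 1)) + 2) by field_simp; ring]
  have h2 : ‖gradient (kappaStar1 N p d ν) y‖ ^ 2
      = kappa0 p ^ 2 * ((1 - ‖d‖ ^ 2) ^ (1 / (p - 1))) ^ 2 * (2 / (p - 1)) ^ 2
        * (1 + ν + ⟪d, y⟫) ^ (-(2 * (2 / (p - 1)) + 2)) * ‖d‖ ^ 2 := by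
    rw [hgrad, hnsm]
    calc (kappa0 p * (1 - ‖d‖ ^ 2) ^ (1 / (p - 1)) * (-(2 / (p - 1)))
          * (1 + ν + ⟪d, y⟫) ^ (-(2 / (p - 1)) - 1)) ^ 2 * ‖d‖ ^ 2
        = kappa0 p ^ 2 * ((1 - ‖d‖ ^ 2) ^ (1 / (p - 1))) ^ 2 * (2 / (p - 1)) ^ 2
          * ((1 + ν + ⟪d, y⟫) ^ (-(2 / (p - 1)) - 1)) ^ (2:ℕ) * ‖d‖ ^ 2 := by ring
      _ = _ := by
          rw [hrw2, show (-(2 / (p - 1)) - 1) + (-(2 / (p - 1)) - 1)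
            = -(2 * (2 / (p - 1)) + 2) by ring]
  have h3 : (⟪y, gradient (kappaStar1 N p d ν) y⟫ : ℝ) ^ 2
      = kappa0 p ^ 2 * ((1 - ‖d‖ ^ 2) ^ (1 / (p - 1))) ^ 2 * (2 / (p - 1)) ^ 2
        * (1 + ν + ⟪d, y⟫) ^ (-(2 * (2 / (p - 1)) + 2)) * ⟪d, y⟫ ^ 2 := by
    rw [hgrad, hism]
    calc (kappa0 p * (1 - ‖d‖ ^ 2) ^ (1 / (p - 1)) * (-(2 / (p - 1)))
          * (1 + ν + ⟪d, y⟫) ^ (-(2 / (p - 1)) - 1) * ⟪d, y⟫) ^ 2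
        = kappa0 p ^ 2 * ((1 - ‖d‖ ^ 2) ^ (1 / (p - 1))) ^ 2 * (2 / (p - 1)) ^ 2
          * ((1 + ν + ⟪d, y⟫) ^ (-(2 / (p - 1)) - 1)) ^ (2:ℕ) * ⟪d, y⟫ ^ 2 := by ring
      _ = _ := by
          rw [hrw2, show (-(2 / (p - 1)) - 1) + (-(2 / (p - 1)) - 1)
            = -(2 * (2 / (p - 1)) + 2) by ring]
  have h4 : kappaStar1 N p d ν y ^ 2
      = kappa0 p ^ 2 * ((1 - ‖d‖ ^ 2) ^ (1 / (p - 1))) ^ 2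
        * (1 + ν + ⟪d, y⟫) ^ (-(2 * (2 / (p - 1)))) := by
    simp only [kappaStar1]
    calc (kappa0 p * (1 - ‖d‖ ^ 2) ^ (1 / (p - 1))
          * (1 + ν + ⟪d, y⟫) ^ (-(2 / (p - 1)))) ^ 2
        = kappa0 p ^ 2 * ((1 - ‖d‖ ^ 2) ^ (1 / (p - 1))) ^ 2
          * ((1 + ν + ⟪d, y⟫) ^ (-(2 / (p - 1)))) ^ (2:ℕ) := by ring
      _ = _ := by
          rw [hrw2, show -(2 / (p - 1)) + -(2 / (p - 1)) = -(2 * (2 / (p - 1))) by ring]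
  have h5 : |kappaStar1 N p d ν y| ^ (p + 1)
      = kappa0 p ^ 2 * (2 * (p + 1) / (p - 1) ^ 2)
        * (((1 - ‖d‖ ^ 2) ^ (1 / (p - 1))) ^ 2 * (1 - ‖d‖ ^ 2))
        * (1 + ν + ⟪d, y⟫) ^ (-(2 * (2 / (p - 1)) + 2)) := by
    have hpos : 0 < kappaStar1 N p d ν y := by
      simp only [kappaStar1]
      exact mul_pos (mul_pos hκ hX) (hWpos _)
    rw [abs_of_pos hpos]
    simp only [kappaStar1]
    rw [Real.mul_rpow (mul_nonneg hκ.le hX.le) (hWpos _).le,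
      Real.mul_rpow hκ.le hX.le]
    rw [rpow_p1 hκ, rpow_p1 hX, hκp, hXp]
    rw [← Real.rpow_mul hw.le]
    rw [show -(2 / (p - 1)) * (p + 1) = -(2 * (2 / (p - 1)) + 2) by field_simp; ring]
  rw [h1, h2, h3, h4, h5, rho]
  simp only [Gfun, hmx]
  have hw1 : (1 + ν + ⟪d, y⟫) ^ (-(2 * (2 / (p - 1)) + 1))
      = (1 + ν + ⟪d, y⟫) ^ (-(2 * (2 / (p - 1)))) * (1 + ν + ⟪d, y⟫)⁻¹ := by
    rw [show -(2 * (2 / (p - 1)) + 1) = -(2 * (2 / (p - 1))) + (-1) by ring,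
      Real.rpow_add hw, Real.rpow_neg_one]
  have hw2 : (1 + ν + ⟪d, y⟫) ^ (-(2 * (2 / (p - 1)) + 2))
      = (1 + ν + ⟪d, y⟫) ^ (-(2 * (2 / (p - 1))))
        * ((1 + ν + ⟪d, y⟫)⁻¹ * (1 + ν + ⟪d, y⟫)⁻¹) := by
    rw [show -(2 * (2 / (p - 1)) + 2) = -(2 * (2 / (p - 1))) + (-1 + -1) by ring,
      Real.rpow_add hw, Real.rpow_add hw, Real.rpow_neg_one]
  rw [hw1, hw2]
  have hwne : (1 + ν + ⟪d, y⟫) ≠ 0 := hw.ne'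
  set c : ℝ := (inner ℝ d y : ℝ) with hcdef
  set W : ℝ := (1 + ν + c) ^ (-(2 * (2 / (p - 1)))) with hWdef
  set R : ℝ := (1 - ‖y‖ ^ 2) ^ alphaExp N p with hRdef
  set X : ℝ := (1 - ‖d‖ ^ 2) ^ (1 / (p - 1)) with hXdef
  field_simp
  ring

set_option maxHeartbeats 2000000 in
/-- Explicit value of the energy of the generalized solitons `κ*(d,ν)`. -/
theorem stmt18 (N : ℕ) (p : ℝ) (hN : 1 ≤ N) (hp1 : 1 < p)
    (hpc : 2 ≤ N → p < 1 + 4 / ((N : ℝ) - 1))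
    (d : EuclideanSpace ℝ (Fin N)) (hd : ‖d‖ < 1)
    (ν : ℝ) (hν : -1 + ‖d‖ < ν)
    (lam : ℝ) (hlam : lam = ((1 - ‖d‖ ^ 2) / ((1 + ν) ^ 2 - ‖d‖ ^ 2)) ^ (1 / (p - 1))) :
    Efun N p (kappaStar1 N p d ν) (kappaStar2 N p d ν)
      = Efun N p (fun _ => kappa0 p) (fun _ => 0) / (p - 1) * lam ^ 2 *
          (p + 1 + 2 * lam ^ (p - 1) * (ν ^ 2 / (1 - ‖d‖ ^ 2) - 1)) := by
  subst hlam
  obtain ⟨n, rfl⟩ : ∃ n, N = n + 1 := ⟨N - 1, by omega⟩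
  have hp : 0 < p - 1 := by linarith
  have hp1' : (0:ℝ) < p + 1 := by linarith
  have hγ : (0:ℝ) < 2 / (p - 1) := by positivity
  have hb0 : (0:ℝ) ≤ ‖d‖ := norm_nonneg d
  have hba : ‖d‖ < 1 + ν := by linarith
  have ha : (0:ℝ) < 1 + ν := lt_of_le_of_lt hb0 hba
  have hs : (0:ℝ) < 1 - ‖d‖ ^ 2 := by nlinarith
  have hq : (0:ℝ) < (1 + ν) ^ 2 - ‖d‖ ^ 2 := by nlinarith
  have hαv : alphaExp (n + 1) p = 2 / (p - 1) - n / 2 := by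
    rw [alphaExp]; push_cast; ring
  have hα : 0 < alphaExp (n + 1) p := by
    rw [hαv]
    rcases Nat.eq_zero_or_pos n with rfl | hn
    · simpa using hγ
    · have hn' : (0:ℝ) < n := by exact_mod_cast hn
      have hcond : p < 1 + 4 / n := by
        have h := hpc (by omega)
        have he : ((n + 1 : ℕ) : ℝ) - 1 = n := by push_cast; ring
        rwa [he] at h
      have h4 : (n:ℝ) * (p - 1) < 4 := by
        have h4' : (p - 1) * n < 4 := by
          rw [← lt_div_iff₀ hn']; linarith
        nlinarith
      rw [sub_pos, div_lt_div_iff₀ (by norm_num) hp]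
      linarith
  have hαγ : alphaExp (n + 1) p + (n:ℝ) / 2 = 2 / (p - 1) := by rw [hαv]; ring
  have hA : (0:ℝ) < 2 * (p + 1) / (p - 1) ^ 2 := by positivity
  have hκ : 0 < kappa0 p := Real.rpow_pos_of_pos hA _
  have hκp : kappa0 p ^ (p - 1) = 2 * (p + 1) / (p - 1) ^ 2 := by
    rw [kappa0, ← Real.rpow_mul hA.le, one_div, inv_mul_cancel₀ hp.ne', Real.rpow_one]
  -- Energy of the constant soliton
  have hE0 : Efun (n + 1) p (fun _ => kappa0 p) (fun _ => 0)
      = sliceC n (alphaExp (n + 1) p)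
        * (kappa0 p ^ 2 * (p - 1)⁻¹ * ∫ t in (-1:ℝ)..1, (1 - t ^ 2) ^ (2 / (p - 1))) := by
    have hsl := sliceMain n hα d (fun _ : ℝ => kappa0 p ^ 2 * (p - 1)⁻¹) continuous_const
    rw [hαγ] at hsl
    rw [intervalIntegral.integral_const_mul] at hsl
    rw [Efun]
    rw [setIntegral_congr_fun measurableSet_ball
      (g := fun y : EuclideanSpace ℝ (Fin (n+1)) =>
        kappa0 p ^ 2 * (p - 1)⁻¹ * (1 - ‖y‖ ^ 2) ^ alphaExp (n+1) p) ?_]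
    · rw [hsl]
    · intro y _
      simp only [gradient_fun_const]
      rw [norm_zero, inner_zero_right, rho]
      rw [abs_of_pos hκ, rpow_p1 hκ, hκp]
      have : (0:ℝ) ^ 2 = 0 := by norm_num
      field_simp
      ring
  -- Energy of κ*
  have hEstar : Efun (n + 1) p (kappaStar1 (n+1) p d ν) (kappaStar2 (n+1) p d ν)
      = sliceC n (alphaExp (n + 1) p)
        * ∫ t in (-1:ℝ)..1, Gfun (n+1) p d ν (‖d‖ * t) * (1 - t ^ 2) ^ (2 / (p - 1)) := by
    have hmxc : Continuous (mx ‖d‖ ν) := by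
      apply Continuous.max
      · exact continuous_const.add continuous_id
      · exact continuous_const
    have hmxpos : ∀ c : ℝ, 0 < mx ‖d‖ ν c := by
      intro c
      apply lt_max_of_lt_right
      linarith
    have hGcont : Continuous (Gfun (n+1) p d ν) := by
      apply continuous_const.mul
      have hr : ∀ m : ℝ, Continuous fun c : ℝ => mx ‖d‖ ν c ^ m := by
        intro m
        rw [continuous_iff_continuousAt]
        intro c
        exact (hmxc.continuousAt).rpow_const (Or.inl (hmxpos c).ne')
      exact (((continuous_const.mul (hr _)).add (continuous_const.mul (hr _))).add
        (continuous_const.mul (hr _)))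
    have hsl := sliceMain n hα d (Gfun (n+1) p d ν) hGcont
    rw [hαγ] at hsl
    rw [Efun]
    rw [setIntegral_congr_fun measurableSet_ball
      (g := fun y : EuclideanSpace ℝ (Fin (n+1)) =>
        Gfun (n+1) p d ν ⟪d, y⟫ * (1 - ‖y‖ ^ 2) ^ alphaExp (n+1) p) ?_]
    · rw [hsl]
    · intro y hy
      exact pointwise_eq (n+1) hp1 d hd ν hν y (mem_ball_zero_iff.1 hy)
  -- expand the 1D integral of Gfun
  have hmxt : ∀ t ∈ Set.uIcc (-1:ℝ) 1, mx ‖d‖ ν (‖d‖ * t) = 1 + ν + ‖d‖ * t := by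
    intro t ht
    rw [Set.uIcc_of_le (by norm_num)] at ht
    apply max_eq_left
    nlinarith [ht.1, ht.2]
  have hJexp : (∫ t in (-1:ℝ)..1, Gfun (n+1) p d ν (‖d‖ * t) * (1 - t ^ 2) ^ (2 / (p - 1)))
      = (kappa0 p * (1 - ‖d‖ ^ 2) ^ (1 / (p - 1))) ^ 2 *
        ((2 / (p - 1) ^ 2 * (ν ^ 2 - (1 - ‖d‖ ^ 2) - ((1 + ν) ^ 2 - ‖d‖ ^ 2)))
            * (∫ t in (-1:ℝ)..1, (1 - t ^ 2) ^ (2 / (p - 1))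
                * (1 + ν + ‖d‖ * t) ^ (-(2 * (2 / (p - 1)) + 2)))
          + (((2 / (p - 1)) ^ 2 * (1 + ν))
            * (∫ t in (-1:ℝ)..1, (1 - t ^ 2) ^ (2 / (p - 1))
                * (1 + ν + ‖d‖ * t) ^ (-(2 * (2 / (p - 1)) + 1)))
          + (1 / (p - 1))
            * (∫ t in (-1:ℝ)..1, (1 - t ^ 2) ^ (2 / (p - 1))
                * (1 + ν + ‖d‖ * t) ^ (-(2 * (2 / (p - 1))))))) := by
    rw [intervalIntegral.integral_congr
      (g := fun t => (kappa0 p * (1 - ‖d‖ ^ 2) ^ (1 / (p - 1))) ^ 2 *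
        ((2 / (p - 1) ^ 2 * (ν ^ 2 - (1 - ‖d‖ ^ 2) - ((1 + ν) ^ 2 - ‖d‖ ^ 2)))
            * ((1 - t ^ 2) ^ (2 / (p - 1)) * (1 + ν + ‖d‖ * t) ^ (-(2 * (2 / (p - 1)) + 2)))
          + (((2 / (p - 1)) ^ 2 * (1 + ν))
            * ((1 - t ^ 2) ^ (2 / (p - 1)) * (1 + ν + ‖d‖ * t) ^ (-(2 * (2 / (p - 1)) + 1)))
          + (1 / (p - 1))
            * ((1 - t ^ 2) ^ (2 / (p - 1)) * (1 + ν + ‖d‖ * t) ^ (-(2 * (2 / (p - 1)))))))) ?_]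
    · rw [intervalIntegral.integral_const_mul]
      rw [intervalIntegral.integral_add
        ((intervalIntegrable_aux hγ hb0 hba).const_mul _)
        (((intervalIntegrable_aux hγ hb0 hba).const_mul _).add
          ((intervalIntegrable_aux hγ hb0 hba).const_mul _))]
      rw [intervalIntegral.integral_add
        ((intervalIntegrable_aux hγ hb0 hba).const_mul _)
        ((intervalIntegrable_aux hγ hb0 hba).const_mul _)]
      rw [intervalIntegral.integral_const_mul, intervalIntegral.integral_const_mul,
        intervalIntegral.integral_const_mul]
    · intro t ht
      simp only [Gfun, hmxt t ht]
      ring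
  -- 1D identities
  have hA1 := oneDimA (a := 1 + ν) (b := ‖d‖) hγ hb0 hba
  have hB1 := oneDimB (a := 1 + ν) (b := ‖d‖) hγ hb0 hba
  have hJ0v : (∫ t in (-1:ℝ)..1, (1 - t ^ 2) ^ (2 / (p - 1))
        * (1 + ν + ‖d‖ * t) ^ (-(2 * (2 / (p - 1)))))
      = (2 * (2 / (p - 1)) + 1) * ((1 + ν) ^ 2 - ‖d‖ ^ 2)
          * (∫ t in (-1:ℝ)..1, (1 - t ^ 2) ^ (2 / (p - 1))
              * (1 + ν + ‖d‖ * t) ^ (-(2 * (2 / (p - 1)) + 2)))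
        - 2 * (1 + ν) * (2 / (p - 1))
          * (∫ t in (-1:ℝ)..1, (1 - t ^ 2) ^ (2 / (p - 1))
              * (1 + ν + ‖d‖ * t) ^ (-(2 * (2 / (p - 1)) + 1))) := by
    linarith [hB1]
  rw [hEstar, hE0, hJexp, hJ0v, hA1]
  -- rpow bookkeeping
  have hlamp : (((1 - ‖d‖ ^ 2) / ((1 + ν) ^ 2 - ‖d‖ ^ 2)) ^ (1 / (p - 1))) ^ (p - 1)
      = (1 - ‖d‖ ^ 2) / ((1 + ν) ^ 2 - ‖d‖ ^ 2) := by
    rw [← Real.rpow_mul (by positivity), one_div, inv_mul_cancel₀ hp.ne', Real.rpow_one]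
  have hlam2 : (((1 - ‖d‖ ^ 2) / ((1 + ν) ^ 2 - ‖d‖ ^ 2)) ^ (1 / (p - 1))) ^ (2:ℕ)
      = ((1 - ‖d‖ ^ 2) ^ (1 / (p - 1))) ^ (2:ℕ)
        / (((1 + ν) ^ 2 - ‖d‖ ^ 2) ^ (1 / (p - 1))) ^ (2:ℕ) := by
    rw [Real.div_rpow hs.le hq.le, div_pow]
  have hqpow : ((1 + ν) ^ 2 - ‖d‖ ^ 2) ^ (-(2 / (p - 1) + 1))
      = ((((1 + ν) ^ 2 - ‖d‖ ^ 2) ^ (1 / (p - 1))) ^ (2:ℕ)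
          * ((1 + ν) ^ 2 - ‖d‖ ^ 2))⁻¹ := by
    rw [Real.rpow_neg hq.le]
    congr 1
    rw [show 2 / (p - 1) + 1 = (1 / (p - 1) + 1 / (p - 1)) + 1 by ring,
      Real.rpow_add hq, Real.rpow_add hq, Real.rpow_one]
    ring
  rw [hlamp, hlam2, hqpow]
  have hY : (0:ℝ) < (((1 + ν) ^ 2 - ‖d‖ ^ 2)) ^ (1 / (p - 1)) := Real.rpow_pos_of_pos hq _
  field_simp
  ring
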